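/- For abstract feature structures A and B: every TFS in Conc(A) is an alphabetic variant of every TFS in Conc(B) if and only if A = B. -/

import Mathlib

def deltaStar {F N : Type*} (d : N → F → Option N) : N → List F → Option N
  | q, [] => some q
  | q, f :: rest => (d q f).bind fun q' => deltaStar d q' rest

/-- A typed feature structure: a finite rooted graph with feature-labelled arcs,
all of whose nodes are reachable from the root. -/
structure TFS (F N : Type*) where
  Q : Finset N
  root : N
  root_mem : root ∈ Q
  delta : N → F → Option N
  delta_dom : ∀ q f q', delta q f = some q' → q ∈ Q ∧ q' ∈ Q
  reach : ∀ q ∈ Q, ∃ π : List F, deltaStar delta root π = some q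

/-- The value `δ(q̄, π)` of a path from the root. -/
def TFS.val {F N : Type*} (A : TFS F N) (π : List F) : Option N :=
  deltaStar A.delta A.root π

/-- `Π(A)`, the set of paths of `A`. -/
def TFS.paths {F N : Type*} (A : TFS F N) : Set (List F) :=
  {π | (A.val π).isSome}

/-- A TFS is cyclic if some node returns to itself via a nonempty path. -/
def TFS.Cyclic {F N : Type*} (A : TFS F N) : Prop :=
  ∃ q ∈ A.Q, ∃ α : List F, α ≠ [] ∧ deltaStar A.delta q α = some q

/-- Subsumption of TFSs via a subsumption morphism. -/
def Subsumes {F N T : Type*} [PartialOrder T] (θ : N → T) (A B : TFS F N) : Prop :=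
  ∃ h : N → N,
    (∀ q ∈ A.Q, h q ∈ B.Q) ∧
    h A.root = B.root ∧
    (∀ q ∈ A.Q, θ q ≤ θ (h q)) ∧
    (∀ q f q', A.delta q f = some q' → B.delta (h q) f = some (h q'))

/-- Bounded completeness: every up-bounded subset has a least upper bound. -/
def BddComplete (T : Type*) [PartialOrder T] : Prop :=
  ∀ S : Set T, (∃ u, ∀ t ∈ S, t ≤ u) → ∃ l, IsLUB S l

/-- A pre-abstract feature structure: a partial assignment of types to paths
(whose domain is the path set `Π`) together with a reentrancy relation. -/
structure PreAFS (F T : Type*) where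
  theta : List F → Option T
  rel : List F → List F → Prop

/-- The path set `Π` of a pre-AFS. -/
def PreAFS.dom {F T : Type*} (A : PreAFS F T) : Set (List F) :=
  {π | (A.theta π).isSome}

/-- The pre-AFS conditions: `Π` is nonempty and `≈ ⊆ Π × Π`. -/
def IsPreAFS {F T : Type*} (A : PreAFS F T) : Prop :=
  A.dom.Nonempty ∧ ∀ π₁ π₂, A.rel π₁ π₂ → π₁ ∈ A.dom ∧ π₂ ∈ A.dom

/-- `Π` is prefix-closed. -/
def PrefixClosed {F T : Type*} (A : PreAFS F T) : Prop :=
  ∀ π α : List F, π ++ α ∈ A.dom → π ∈ A.dom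

/-- Fusion-closedness. -/
def FusionClosed {F T : Type*} (A : PreAFS F T) : Prop :=
  ∀ π π' α α' : List F, π ++ α ∈ A.dom → π' ++ α' ∈ A.dom → A.rel π π' →
    π ++ α' ∈ A.dom ∧ π' ++ α ∈ A.dom ∧
    A.rel (π ++ α') (π' ++ α') ∧ A.rel (π' ++ α) (π ++ α)

/-- `≈` is an equivalence relation on `Π`. -/
def EquivOnDom {F T : Type*} (A : PreAFS F T) : Prop :=
  (∀ π ∈ A.dom, A.rel π π) ∧
  (∀ π₁ π₂, A.rel π₁ π₂ → A.rel π₂ π₁) ∧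
  (∀ π₁ π₂ π₃, A.rel π₁ π₂ → A.rel π₂ π₃ → A.rel π₁ π₃)

/-- `≈` has finitely many equivalence classes. -/
def FiniteIndex {F T : Type*} (A : PreAFS F T) : Prop :=
  {C : Set (List F) | ∃ π ∈ A.dom, C = {π' | A.rel π π'}}.Finite

/-- `Θ` respects the equivalence `≈`. -/
def RespectsRel {F T : Type*} (A : PreAFS F T) : Prop :=
  ∀ π₁ π₂, A.rel π₁ π₂ → A.theta π₁ = A.theta π₂

/-- Abstract feature structures. -/
def IsAFS {F T : Type*} (A : PreAFS F T) : Prop :=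
  IsPreAFS A ∧ PrefixClosed A ∧ FusionClosed A ∧
    EquivOnDom A ∧ FiniteIndex A ∧ RespectsRel A

/-- Bounded completeness: every up-bounded subset has a least upper bound. -/
def BddCompleteTypes (T : Type*) [PartialOrder T] : Prop :=
  ∀ S : Set T, (∃ u, ∀ t ∈ S, t ≤ u) → ∃ l, IsLUB S l

/-- The concretization `Conc(A)` of a pre-AFS `A`: all TFSs obtained by injecting
the `≈`-equivalence classes (represented via a choice function `g` constant exactly
on classes) into the nodes, with root the class of `ε`, types given by `Θ`, and
transitions `δ(q_[π], f) = q_[πf]` whenever `πf ∈ Π`. -/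
def Conc {F N T : Type*} (θ : N → T) (A : PreAFS F T) : Set (TFS F N) :=
  {B | ∃ g : List F → N,
    B.root = g [] ∧
    (B.Q : Set N) = g '' A.dom ∧
    (∀ π₁ ∈ A.dom, ∀ π₂ ∈ A.dom, (g π₁ = g π₂ ↔ A.rel π₁ π₂)) ∧
    (∀ π ∈ A.dom, A.theta π = some (θ (g π))) ∧
    ∀ π ∈ A.dom, ∀ f : F,
      (π ++ [f] ∈ A.dom → B.delta (g π) f = some (g (π ++ [f]))) ∧
      (π ++ [f] ∉ A.dom → B.delta (g π) f = none)}

namespace MyAux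

variable {F N T : Type*}

lemma nil_mem_dom (A : PreAFS F T) (hA : IsAFS A) : [] ∈ A.dom := by
  obtain ⟨π, hπ⟩ := hA.1.1
  exact hA.2.1 [] π (by simpa using hπ)

lemma deltaStar_conc (A : PreAFS F T) (hPC : PrefixClosed A) (g : List F → N)
    (d : N → F → Option N)
    (hd : ∀ π ∈ A.dom, ∀ f, π ++ [f] ∈ A.dom → d (g π) f = some (g (π ++ [f]))) :
    ∀ α π, π ∈ A.dom → π ++ α ∈ A.dom → deltaStar d (g π) α = some (g (π ++ α)) := by
  intro α
  induction α with
  | nil => intro π hπ _; simp [deltaStar]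
  | cons f rest ih =>
    intro π hπ hmem
    have h1 : (π ++ [f]) ++ rest ∈ A.dom := by simpa [List.append_assoc] using hmem
    have h2 : π ++ [f] ∈ A.dom := hPC _ _ h1
    have := ih (π ++ [f]) h2 h1
    simp only [deltaStar, hd π hπ f h2, Option.bind_some]
    simpa [List.append_assoc] using this

lemma deltaStar_conc_none (A : PreAFS F T) (hPC : PrefixClosed A) (g : List F → N)
    (d : N → F → Option N)
    (hd : ∀ π ∈ A.dom, ∀ f, π ++ [f] ∈ A.dom → d (g π) f = some (g (π ++ [f])))
    (hdn : ∀ π ∈ A.dom, ∀ f, π ++ [f] ∉ A.dom → d (g π) f = none) :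
    ∀ α π, π ∈ A.dom → π ++ α ∉ A.dom → deltaStar d (g π) α = none := by
  intro α
  induction α with
  | nil => intro π hπ hmem; exact absurd (by simpa using hπ) hmem
  | cons f rest ih =>
    intro π hπ hmem
    by_cases h2 : π ++ [f] ∈ A.dom
    · have h1 : (π ++ [f]) ++ rest ∉ A.dom := by simpa [List.append_assoc] using hmem
      simp only [deltaStar, hd π hπ f h2, Option.bind_some]
      exact ih (π ++ [f]) h2 h1
    · simp [deltaStar, hdn π hπ f h2]

lemma deltaStar_morph {dX dY : N → F → Option N} {h : N → N}
    (hm : ∀ q f q', dX q f = some q' → dY (h q) f = some (h q')) :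
    ∀ α (q₀ q : N), deltaStar dX q₀ α = some q → deltaStar dY (h q₀) α = some (h q) := by
  intro α
  induction α with
  | nil => intro q₀ q hq; simp only [deltaStar] at hq ⊢; rw [Option.some_inj] at hq; rw [hq]
  | cons f rest ih =>
    intro q₀ q hq
    simp only [deltaStar] at hq ⊢
    cases hd : dX q₀ f with
    | none => rw [hd] at hq; simp at hq
    | some q₁ =>
      rw [hd] at hq
      simp only [Option.bind_some] at hq
      rw [hm q₀ f q₁ hd]
      simp only [Option.bind_some]
      exact ih q₁ q hq

lemma exists_inj_typed {ι : Type*} [Finite ι] [Infinite N] (θ : N → T)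
    (hrich : ∀ t : T, {q : N | θ q = t}.Infinite) (τ : ι → T) :
    ∃ e : ι → N, Function.Injective e ∧ ∀ i, θ (e i) = τ i := by
  obtain ⟨n, ⟨emb⟩⟩ := Finite.exists_equiv_fin ι
  set E : T → ℕ → N := fun t k => ((Set.Infinite.natEmbedding _ (hrich t)) k).1 with hE
  have hEmem : ∀ t k, θ (E t k) = t := fun t k =>
    ((Set.Infinite.natEmbedding _ (hrich t)) k).2
  have hEinj : ∀ t, Function.Injective (E t) := by
    intro t a b hab
    exact (Set.Infinite.natEmbedding _ (hrich t)).injective (Subtype.ext hab)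
  refine ⟨fun i => E (τ i) (emb i), ?_, fun i => hEmem _ _⟩
  intro i j hij
  dsimp only at hij
  have ht : τ i = τ j := by rw [← hEmem (τ i) (emb i), ← hEmem (τ j) (emb j), hij]
  rw [ht] at hij
  exact emb.injective (Fin.val_injective (hEinj _ hij))

/-- The setoid on the domain of an AFS. -/
def domSetoid (A : PreAFS F T) (hA : IsAFS A) : Setoid {π : List F // π ∈ A.dom} where
  r a b := A.rel a.1 b.1
  iseqv := ⟨fun a => hA.2.2.2.1.1 a.1 a.2, fun h => hA.2.2.2.1.2.1 _ _ h,
    fun h1 h2 => hA.2.2.2.1.2.2 _ _ _ h1 h2⟩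

lemma finite_quotient (A : PreAFS F T) (hA : IsAFS A) :
    Finite (Quotient (domSetoid A hA)) := by
  have hfin : {C : Set (List F) | ∃ π ∈ A.dom, C = {π' | A.rel π π'}}.Finite :=
    hA.2.2.2.2.1
  set φ : Quotient (domSetoid A hA) → Set (List F) :=
    Quotient.lift (fun π : {π : List F // π ∈ A.dom} => {π' | A.rel π.1 π'})
      (by
        intro a b hab
        ext π'
        constructor
        · intro h; exact hA.2.2.2.1.2.2 _ _ _ (hA.2.2.2.1.2.1 _ _ hab) h
        · intro h; exact hA.2.2.2.1.2.2 _ _ _ hab h) with hφ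
  have hφmem : ∀ c, φ c ∈ {C : Set (List F) | ∃ π ∈ A.dom, C = {π' | A.rel π π'}} := by
    intro c
    induction c using Quotient.ind with
    | _ a => exact ⟨a.1, a.2, rfl⟩
  have hφinj : Function.Injective φ := by
    intro c₁ c₂ h
    induction c₁ using Quotient.ind with
    | _ a =>
      induction c₂ using Quotient.ind with
      | _ b =>
        apply Quotient.sound
        have : b.1 ∈ {π' | A.rel a.1 π'} := by
          rw [show {π' | A.rel a.1 π'} = φ ⟦a⟧ from rfl, h]
          exact hA.2.2.2.1.1 b.1 b.2
        exact this
  have : Finite ↥{C : Set (List F) | ∃ π ∈ A.dom, C = {π' | A.rel π π'}} :=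
    hfin.to_subtype
  exact Finite.of_injective
    (fun c => (⟨φ c, hφmem c⟩ : {C : Set (List F) | ∃ π ∈ A.dom, C = {π' | A.rel π π'}}))
    (fun c₁ c₂ h => hφinj (congrArg Subtype.val h))

lemma conc_nonempty [Infinite N] (θ : N → T)
    (hrich : ∀ t : T, {q : N | θ q = t}.Infinite)
    (A : PreAFS F T) (hA : IsAFS A) : (Conc (N := N) θ A).Nonempty := by
  classical
  have hEq := hA.2.2.2.1
  have hPC := hA.2.1
  have hFC := hA.2.2.1
  have hRR := hA.2.2.2.2.2
  haveI : Finite (Quotient (domSetoid A hA)) := finite_quotient A hA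
  -- type of each class
  set τ : Quotient (domSetoid A hA) → T :=
    Quotient.lift (fun π : {π : List F // π ∈ A.dom} => (A.theta π.1).get π.2)
      (by
        intro a b hab
        have h := hRR a.1 b.1 hab
        have := Option.some_get a.2
        have := Option.some_get b.2
        rw [← Option.some_inj]
        exact (Option.some_get a.2).trans (h.trans (Option.some_get b.2).symm)) with hτ
  obtain ⟨e, heinj, heθ⟩ := exists_inj_typed θ hrich τ
  set g : List F → N := fun π =>
    if h : π ∈ A.dom then e (Quotient.mk (domSetoid A hA) ⟨π, h⟩)
    else Classical.arbitrary N with hg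
  have hgdef : ∀ π (h : π ∈ A.dom), g π = e (Quotient.mk (domSetoid A hA) ⟨π, h⟩) := by
    intro π h; simp [hg, h]
  -- g iff
  have hgiff : ∀ π₁ ∈ A.dom, ∀ π₂ ∈ A.dom, (g π₁ = g π₂ ↔ A.rel π₁ π₂) := by
    intro π₁ h₁ π₂ h₂
    rw [hgdef π₁ h₁, hgdef π₂ h₂]
    constructor
    · intro h
      exact Quotient.exact (heinj h)
    · intro h
      exact congrArg e (Quotient.sound h)
  -- theta
  have hgθ : ∀ π ∈ A.dom, A.theta π = some (θ (g π)) := by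
    intro π h
    rw [hgdef π h, heθ]
    show A.theta π = some ((A.theta π).get h)
    exact (Option.some_get h).symm
  -- image is finite
  have himg : g '' A.dom = Set.range e := by
    ext q
    constructor
    · rintro ⟨π, hπ, rfl⟩
      exact ⟨_, (hgdef π hπ).symm⟩
    · rintro ⟨c, rfl⟩
      induction c using Quotient.ind with
      | _ a => exact ⟨a.1, a.2, hgdef a.1 a.2⟩
  have hQfin : (g '' A.dom).Finite := by
    rw [himg]; exact Set.finite_range e
  -- delta
  set d : N → F → Option N := fun q f =>
    if h : ∃ π, π ∈ A.dom ∧ g π = q ∧ π ++ [f] ∈ A.dom then some (g (h.choose ++ [f]))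
    else none with hd
  have hdsome : ∀ π ∈ A.dom, ∀ f, π ++ [f] ∈ A.dom → d (g π) f = some (g (π ++ [f])) := by
    intro π hπ f hπf
    have hex : ∃ π', π' ∈ A.dom ∧ g π' = g π ∧ π' ++ [f] ∈ A.dom := ⟨π, hπ, rfl, hπf⟩
    rw [hd]
    simp only [dif_pos hex]
    obtain ⟨hmem, hgeq, hmemf⟩ := hex.choose_spec
    have hrel : A.rel hex.choose π := (hgiff _ hmem _ hπ).1 hgeq
    have := hFC hex.choose π [f] [f] hmemf hπf hrel
    have hrel2 : A.rel (hex.choose ++ [f]) (π ++ [f]) := this.2.2.1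
    exact congrArg some ((hgiff _ (hA.1.2 _ _ hrel2).1 _ hπf).2 hrel2)
  have hdnone : ∀ π ∈ A.dom, ∀ f, π ++ [f] ∉ A.dom → d (g π) f = none := by
    intro π hπ f hπf
    rw [hd]
    apply dif_neg
    rintro ⟨π', hmem, hgeq, hmemf⟩
    have hrel : A.rel π' π := (hgiff _ hmem _ hπ).1 hgeq
    have := hFC π' π [f] [] hmemf (by simpa using hπ) hrel
    exact hπf this.2.1
  have hnil : [] ∈ A.dom := nil_mem_dom A hA
  -- the TFS
  refine ⟨⟨hQfin.toFinset, g [], ?_, d, ?_, ?_⟩, g, rfl, by simp [hQfin], hgiff, hgθ,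
    fun π hπ f => ⟨hdsome π hπ f, hdnone π hπ f⟩⟩
  · simp only [Set.Finite.mem_toFinset]
    exact ⟨[], hnil, rfl⟩
  · intro q f q' hq
    rw [hd] at hq
    dsimp only at hq
    by_cases hex : ∃ π, π ∈ A.dom ∧ g π = q ∧ π ++ [f] ∈ A.dom
    · obtain ⟨hmem, hgeq, hmemf⟩ := hex.choose_spec
      rw [dif_pos hex, Option.some_inj] at hq
      constructor
      · simp only [Set.Finite.mem_toFinset]
        exact ⟨hex.choose, hmem, hgeq⟩
      · simp only [Set.Finite.mem_toFinset]
        exact ⟨hex.choose ++ [f], hmemf, hq⟩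
    · rw [dif_neg hex] at hq; simp at hq
  · intro q hq
    simp only [Set.Finite.mem_toFinset] at hq
    obtain ⟨π, hπ, rfl⟩ := hq
    exact ⟨π, by simpa using deltaStar_conc A hPC g d hdsome π [] hnil (by simpa using hπ)⟩


lemma subsume_dom {A B : PreAFS F T} (hA : IsAFS A) (hB : IsAFS B)
    {X Y : TFS F N} {gA gB : List F → N} {h : N → N}
    (hXroot : X.root = gA [])
    (hXδ : ∀ π ∈ A.dom, ∀ f : F,
      (π ++ [f] ∈ A.dom → X.delta (gA π) f = some (gA (π ++ [f]))) ∧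
      (π ++ [f] ∉ A.dom → X.delta (gA π) f = none))
    (hYroot : Y.root = gB [])
    (hYδ : ∀ π ∈ B.dom, ∀ f : F,
      (π ++ [f] ∈ B.dom → Y.delta (gB π) f = some (gB (π ++ [f]))) ∧
      (π ++ [f] ∉ B.dom → Y.delta (gB π) f = none))
    (hroot : h X.root = Y.root)
    (hδ : ∀ q f q', X.delta q f = some q' → Y.delta (h q) f = some (h q')) :
    ∀ π ∈ A.dom, π ∈ B.dom ∧ h (gA π) = gB π := by
  intro π hπ
  have hXval : deltaStar X.delta (gA []) π = some (gA π) := by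
    simpa using deltaStar_conc A hA.2.1 gA X.delta
      (fun π hπ f hf => (hXδ π hπ f).1 hf) π [] (nil_mem_dom A hA) (by simpa using hπ)
  have hYval : deltaStar Y.delta (h (gA [])) π = some (h (gA π)) :=
    deltaStar_morph hδ π _ _ hXval
  have hr : h (gA []) = gB [] := by rw [← hXroot, hroot, hYroot]
  rw [hr] at hYval
  by_cases hπB : π ∈ B.dom
  · refine ⟨hπB, ?_⟩
    have hYval2 : deltaStar Y.delta (gB []) π = some (gB π) := by
      simpa using deltaStar_conc B hB.2.1 gB Y.delta
        (fun π hπ f hf => (hYδ π hπ f).1 hf) π [] (nil_mem_dom B hB) (by simpa using hπB)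
    rw [hYval2, Option.some_inj] at hYval
    exact hYval.symm
  · exfalso
    have hnone : deltaStar Y.delta (gB []) π = none := by
      simpa using deltaStar_conc_none B hB.2.1 gB Y.delta
        (fun π hπ f hf => (hYδ π hπ f).1 hf) (fun π hπ f hf => (hYδ π hπ f).2 hf)
        π [] (nil_mem_dom B hB) (by simpa using hπB)
    rw [hnone] at hYval
    simp at hYval

lemma conc_subsumes [PartialOrder T] (θ : N → T) (A : PreAFS F T) (hA : IsAFS A)
    {X Y : TFS F N} (hX : X ∈ Conc θ A) (hY : Y ∈ Conc θ A) : Subsumes θ X Y := by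
  classical
  obtain ⟨gX, hXroot, hXQ, hXiff, hXθ, hXδ⟩ := hX
  obtain ⟨gY, hYroot, hYQ, hYiff, hYθ, hYδ⟩ := hY
  set h : N → N := fun q =>
    if hq : ∃ π, π ∈ A.dom ∧ gX π = q then gY hq.choose else q with hh
  have hkey : ∀ π ∈ A.dom, h (gX π) = gY π := by
    intro π hπ
    have hex : ∃ π', π' ∈ A.dom ∧ gX π' = gX π := ⟨π, hπ, rfl⟩
    rw [hh]
    dsimp only
    rw [dif_pos hex]
    obtain ⟨hmem, hgeq⟩ := hex.choose_spec
    exact (hYiff _ hmem _ hπ).2 ((hXiff _ hmem _ hπ).1 hgeq)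
  refine ⟨h, ?_, ?_, ?_, ?_⟩
  · intro q hq
    have hq' : q ∈ (X.Q : Set N) := hq
    rw [hXQ] at hq'
    obtain ⟨π, hπ, rfl⟩ := hq'
    rw [hkey π hπ]
    have : gY π ∈ (Y.Q : Set N) := by rw [hYQ]; exact ⟨π, hπ, rfl⟩
    exact this
  · rw [hXroot, hYroot, hkey [] (nil_mem_dom A hA)]
  · intro q hq
    have hq' : q ∈ (X.Q : Set N) := hq
    rw [hXQ] at hq'
    obtain ⟨π, hπ, rfl⟩ := hq'
    rw [hkey π hπ]
    have e2 := hYθ π hπ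
    rw [hXθ π hπ] at e2
    exact le_of_eq (Option.some_inj.mp e2)
  · intro q f q' hq
    have hqQ : q ∈ (X.Q : Set N) := (X.delta_dom q f q' hq).1
    rw [hXQ] at hqQ
    obtain ⟨π, hπ, rfl⟩ := hqQ
    by_cases hmemf : π ++ [f] ∈ A.dom
    · have hstep := (hXδ π hπ f).1 hmemf
      rw [hstep, Option.some_inj] at hq
      rw [hkey π hπ, (hYδ π hπ f).1 hmemf, ← hq, hkey _ hmemf]
    · rw [(hXδ π hπ f).2 hmemf] at hq
      simp at hq

end MyAux

/-- for AFSs `A` and `B`: every TFS in `Conc(A)` is an alphabetic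
variant of every TFS in `Conc(B)` iff `A = B`. -/


theorem conc_variants_iff_eq
    {F N T : Type*} [Finite F] [Finite T] [PartialOrder T] [Infinite N]
    (hbc : BddComplete T) (θ : N → T)
    (hrich : ∀ t : T, {q : N | θ q = t}.Infinite)
    (A B : PreAFS F T) (hA : IsAFS A) (hB : IsAFS B) :
    (∀ X ∈ Conc (N := N) θ A, ∀ Y ∈ Conc θ B, Subsumes θ X Y ∧ Subsumes θ Y X) ↔
      A = B := by
  constructor
  · intro hvar
    obtain ⟨X, hXA⟩ := MyAux.conc_nonempty θ hrich A hA
    obtain ⟨Y, hYB⟩ := MyAux.conc_nonempty θ hrich B hB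
    obtain ⟨hXY, hYX⟩ := hvar X hXA Y hYB
    obtain ⟨gA, hXroot, hXQ, hXiff, hXθ, hXδ⟩ := hXA
    obtain ⟨gB, hYroot, hYQ, hYiff, hYθ, hYδ⟩ := hYB
    obtain ⟨h, hhQ, hhroot, hhθ, hhδ⟩ := hXY
    obtain ⟨h', hh'Q, hh'root, hh'θ, hh'δ⟩ := hYX
    have hAB := MyAux.subsume_dom hA hB hXroot hXδ hYroot hYδ hhroot hhδ
    have hBA := MyAux.subsume_dom hB hA hYroot hYδ hXroot hXδ hh'root hh'δ
    have hθeq : ∀ π, A.theta π = B.theta π := by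
      intro π
      by_cases hπ : π ∈ A.dom
      · obtain ⟨hπB, hhg⟩ := hAB π hπ
        obtain ⟨_, hh'g⟩ := hBA π hπB
        rw [hXθ π hπ, hYθ π hπB, Option.some_inj]
        have hmemX : gA π ∈ X.Q := by
          have : gA π ∈ (X.Q : Set N) := by rw [hXQ]; exact ⟨π, hπ, rfl⟩
          exact this
        have hmemY : gB π ∈ Y.Q := by
          have : gB π ∈ (Y.Q : Set N) := by rw [hYQ]; exact ⟨π, hπB, rfl⟩
          exact this
        apply le_antisymm
        · have := hhθ (gA π) hmemX
          rwa [hhg] at this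
        · have := hh'θ (gB π) hmemY
          rwa [hh'g] at this
      · have hπB : π ∉ B.dom := fun hmem => hπ (hBA π hmem).1
        have e1 : A.theta π = none := by
          simpa [PreAFS.dom, Option.not_isSome_iff_eq_none] using hπ
        have e2 : B.theta π = none := by
          simpa [PreAFS.dom, Option.not_isSome_iff_eq_none] using hπB
        rw [e1, e2]
    have hreleq : ∀ π₁ π₂, A.rel π₁ π₂ ↔ B.rel π₁ π₂ := by
      intro π₁ π₂
      constructor
      · intro hr
        obtain ⟨h₁, h₂⟩ := hA.1.2 _ _ hr
        have hg : gA π₁ = gA π₂ := (hXiff _ h₁ _ h₂).2 hr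
        obtain ⟨h₁B, e₁⟩ := hAB π₁ h₁
        obtain ⟨h₂B, e₂⟩ := hAB π₂ h₂
        have hgB : gB π₁ = gB π₂ := by rw [← e₁, ← e₂, hg]
        exact (hYiff _ h₁B _ h₂B).1 hgB
      · intro hr
        obtain ⟨h₁, h₂⟩ := hB.1.2 _ _ hr
        have hg : gB π₁ = gB π₂ := (hYiff _ h₁ _ h₂).2 hr
        obtain ⟨h₁A, e₁⟩ := hBA π₁ h₁
        obtain ⟨h₂A, e₂⟩ := hBA π₂ h₂
        have hgA : gA π₁ = gA π₂ := by rw [← e₁, ← e₂, hg]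
        exact (hXiff _ h₁A _ h₂A).1 hgA
    cases A with
    | mk θA rA =>
      cases B with
      | mk θB rB =>
        simp only [PreAFS.mk.injEq]
        exact ⟨funext hθeq, funext fun π₁ => funext fun π₂ => propext (hreleq π₁ π₂)⟩
  · rintro rfl
    intro X hX Y hY
    exact ⟨MyAux.conc_subsumes θ A hA hX hY, MyAux.conc_subsumes θ A hA hY hX⟩
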